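/- Let p < q be two distinct primes, let n = p^{e_1}·q^{e_2} with e_1, e_2 ≥ 1, let d ≥ 1, and let f(x) ∈ ℤ[x] be a polynomial all of whose coefficients lie in {0,1,…,d}, with deg f(x) < n, such that Φ_n(x) divides f(x). Then there exist polynomials h_{n/p}(x), h_{n/q}(x) ∈ ℤ[x], all of whose coefficients lie in {0,1,…,d}, with deg h_{n/p}(x) < n/p and deg h_{n/q}(x) < n/q, such that f(x) = h_{n/p}(x)·G(n, n/p; x) + h_{n/q}(x)·G(n, n/q; x). In particular, when d = 1 a unital such decomposition exists. -/

import Mathlib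

open Polynomial

/-- The fundamental `r`-recurrent polynomial with respect to `n`:
`G(n,r;x) = 1 + x^r + x^{2r} + ⋯ + x^{n-r} = (x^n - 1)/(x^r - 1)`. -/
noncomputable def Gpoly (R : Type*) [Semiring R] (n r : ℕ) : Polynomial R :=
  ∑ l ∈ Finset.range (n / r), X ^ (l * r)

lemma bezout_X_pow_sub_one : ∀ a b : ℕ, ∃ u v : Polynomial ℤ,
    u * (X ^ a - 1) + v * (X ^ b - 1) = X ^ (Nat.gcd a b) - 1 := by
  intro a
  induction a using Nat.strong_induction_on with
  | _ a ih =>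
    intro b
    match a, ih with
    | 0, _ => exact ⟨0, 1, by simp [Nat.gcd_zero_left]⟩
    | (a+1), ih =>
      obtain ⟨u, v, huv⟩ := ih (b % (a+1)) (Nat.mod_lt _ (Nat.succ_pos a)) (a+1)
      rw [Nat.gcd_rec]
      obtain ⟨w, hw⟩ : (X ^ (a+1) - 1 : Polynomial ℤ) ∣ X ^ ((a+1) * (b / (a+1))) - 1 := by
        have h := sub_dvd_pow_sub_pow (X ^ (a+1) : Polynomial ℤ) 1 (b / (a+1))
        rwa [one_pow, ← pow_mul] at h
      refine ⟨v - u * X ^ (b % (a+1)) * w, u, ?_⟩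
      have hb : (X : Polynomial ℤ) ^ b = X ^ (b % (a+1)) * X ^ ((a+1) * (b / (a+1))) := by
        rw [← pow_add, Nat.mod_add_div]
      have key : (X : Polynomial ℤ) ^ b - 1
          = X ^ (b % (a+1)) * ((X ^ (a+1) - 1) * w) + (X ^ (b % (a+1)) - 1) := by
        rw [← hw]; rw [hb]; ring
      linear_combination huv + u * key

lemma coprime_cyclo {p q : ℕ} (hp : p.Prime) (hq : q.Prime) (hne : p ≠ q) :
    ∃ u v : Polynomial ℤ, u * cyclotomic p ℤ + v * cyclotomic q ℤ = 1 := by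
  haveI : Fact p.Prime := ⟨hp⟩
  haveI : Fact q.Prime := ⟨hq⟩
  obtain ⟨u, v, huv⟩ := bezout_X_pow_sub_one p q
  rw [Nat.Coprime.gcd_eq_one ((Nat.coprime_primes hp hq).2 hne), pow_one] at huv
  have hP : (X : Polynomial ℤ) ^ p - 1 = cyclotomic p ℤ * (X - 1) := by
    rw [cyclotomic_prime, geom_sum_mul]
  have hQ : (X : Polynomial ℤ) ^ q - 1 = cyclotomic q ℤ * (X - 1) := by
    rw [cyclotomic_prime, geom_sum_mul]
  have hX : (X - 1 : Polynomial ℤ) ≠ 0 := by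
    simpa using X_sub_C_ne_zero (1 : ℤ)
  refine ⟨u, v, mul_right_cancel₀ hX ?_⟩
  rw [one_mul]
  linear_combination huv - u * hP - v * hQ

lemma cyclo_expand_pow {p : ℕ} (hp : p.Prime) {k : ℕ} (hk : p ∣ k) :
    ∀ a : ℕ, cyclotomic (k * p ^ a) ℤ = expand ℤ (p ^ a) (cyclotomic k ℤ) := by
  intro a
  induction a with
  | zero => simp
  | succ a iha =>
    have h1 : k * p ^ (a+1) = (k * p ^ a) * p := by ring
    rw [h1, ← cyclotomic_expand_eq_cyclotomic hp (Dvd.dvd.mul_right hk _) ℤ, iha,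
      expand_expand]
    congr 1
    ring

lemma coeff_mul_geom (A : Polynomial ℤ) (r k : ℕ) (hr : 0 < r)
    (hA : ∀ u, r ≤ u → A.coeff u = 0) (i : ℕ) :
    (A * ∑ l ∈ Finset.range k, X ^ (l * r)).coeff i =
      if i < r * k then A.coeff (i % r) else 0 := by
  rw [Finset.mul_sum, finset_sum_coeff]
  have hterm : ∀ l, (A * X ^ (l * r)).coeff i
      = if l * r ≤ i then A.coeff (i - l * r) else 0 := fun l => coeff_mul_X_pow' _ _ _
  split_ifs with hi
  · have hmem : i / r ∈ Finset.range k := by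
      rw [Finset.mem_range]
      exact Nat.div_lt_of_lt_mul hi
    rw [Finset.sum_eq_single_of_mem (i / r) hmem]
    · rw [hterm, if_pos (Nat.div_mul_le_self i r)]
      congr 1
      rw [Nat.sub_eq_iff_eq_add (Nat.div_mul_le_self i r)]
      exact (Nat.mod_add_div' i r).symm
    · intro l _ hne
      rw [hterm]
      split_ifs with hle
      · apply hA
        have h1 : l < i / r := by
          have := (Nat.le_div_iff_mul_le hr).2 hle
          omega
        have h2 : (l + 1) * r ≤ (i / r) * r := Nat.mul_le_mul_right r h1
        have h3 : (i / r) * r ≤ i := Nat.div_mul_le_self i r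
        have h4 : (l + 1) * r = l * r + r := by ring
        omega
      · rfl
  · apply Finset.sum_eq_zero
    intro l hl
    rw [hterm]
    split_ifs with hle
    · apply hA
      have h1 : (l + 1) * r ≤ k * r := Nat.mul_le_mul_right r (Finset.mem_range.1 hl)
      have h4 : (l + 1) * r = l * r + r := by ring
      have : r * k = k * r := by ring
      omega
    · rfl

lemma coeff_mk (c : ℕ → ℤ) (N j : ℕ) :
    (∑ u ∈ Finset.range N, C (c u) * X ^ u).coeff j = if j < N then c j else 0 := by
  rw [finset_sum_coeff]
  have h : ∀ u, (C (c u) * X ^ u).coeff j = if j = u then c u else 0 := by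
    intro u
    rw [coeff_C_mul, coeff_X_pow, mul_ite, mul_one, mul_zero]
  simp only [h]
  simp [Finset.sum_ite_eq, Finset.mem_range]

theorem stmt_10 (p q e₁ e₂ n : ℕ) (hp : p.Prime) (hq : q.Prime) (hpq : p < q)
    (he₁ : 1 ≤ e₁) (he₂ : 1 ≤ e₂) (hn : n = p ^ e₁ * q ^ e₂)
    (d : ℕ) (hd : 1 ≤ d) (f : Polynomial ℤ)
    (hcoeff : ∀ i : ℕ, 0 ≤ f.coeff i ∧ f.coeff i ≤ (d : ℤ))
    (hdeg : f.degree < (n : WithBot ℕ)) (hdvd : cyclotomic n ℤ ∣ f) :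
    ∃ hnp hnq : Polynomial ℤ,
      (∀ i : ℕ, 0 ≤ hnp.coeff i ∧ hnp.coeff i ≤ (d : ℤ)) ∧
      (∀ i : ℕ, 0 ≤ hnq.coeff i ∧ hnq.coeff i ≤ (d : ℤ)) ∧
      hnp.degree < ((n / p : ℕ) : WithBot ℕ) ∧
      hnq.degree < ((n / q : ℕ) : WithBot ℕ) ∧
      f = hnp * Gpoly ℤ n (n / p) + hnq * Gpoly ℤ n (n / q) := by
  classical
  have hd' : (0:ℤ) ≤ (d:ℤ) := by positivity
  by_cases hf0 : f = 0
  · refine ⟨0, 0, ?_, ?_, ?_, ?_, ?_⟩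
    · intro i; simp [hd']
    · intro i; simp [hd']
    · rw [degree_zero]; exact WithBot.bot_lt_coe _
    · rw [degree_zero]; exact WithBot.bot_lt_coe _
    · simp [hf0]
  have hpq' : p ≠ q := Nat.ne_of_lt hpq
  set m : ℕ := p ^ (e₁ - 1) * q ^ (e₂ - 1) with hm
  have hm0 : 0 < m := Nat.mul_pos (pow_pos hp.pos _) (pow_pos hq.pos _)
  have hnm : n = m * p * q := by
    rw [hn, hm]
    obtain ⟨x, rfl⟩ : ∃ x, e₁ = x + 1 := ⟨e₁ - 1, by omega⟩
    obtain ⟨y, rfl⟩ : ∃ y, e₂ = y + 1 := ⟨e₂ - 1, by omega⟩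
    simp only [Nat.add_sub_cancel]
    ring
  have hmq0 : 0 < m * q := Nat.mul_pos hm0 hq.pos
  have hmp0 : 0 < m * p := Nat.mul_pos hm0 hp.pos
  have hnp' : n = (m * q) * p := by rw [hnm]; ring
  have hnq' : n = (m * p) * q := by rw [hnm]
  have hdivp : n / p = m * q := by
    rw [hnp', Nat.mul_div_cancel _ hp.pos]
  have hdivq : n / q = m * p := by
    rw [hnq', Nat.mul_div_cancel _ hq.pos]
  have hcntp : n / (m * q) = p := by
    rw [hnp', Nat.mul_div_cancel_left _ hmq0]
  have hcntq : n / (m * p) = q := by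
    rw [hnq', Nat.mul_div_cancel_left _ hmp0]
  have hGp : Gpoly ℤ n (n / p) = ∑ l ∈ Finset.range p, X ^ (l * (m * q)) := by
    rw [Gpoly, hdivp, hcntp]
  have hGq : Gpoly ℤ n (n / q) = ∑ l ∈ Finset.range q, X ^ (l * (m * p)) := by
    rw [Gpoly, hdivq, hcntq]
  -- cyclotomic n as expansion
  have hΦ : cyclotomic n ℤ = expand ℤ m (cyclotomic (p * q) ℤ) := by
    have h1 := cyclo_expand_pow hp (k := p * q) ⟨q, rfl⟩ (e₁ - 1)
    have h2 := cyclo_expand_pow hq (k := (p * q) * p ^ (e₁ - 1))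
      ⟨p * p ^ (e₁ - 1), by ring⟩ (e₂ - 1)
    have hne : n = ((p * q) * p ^ (e₁ - 1)) * q ^ (e₂ - 1) := by rw [hnm, hm]; ring
    rw [hne, h2, h1, expand_expand]
    congr 1
    rw [hm]; ring
  have hqp_ndvd : ¬ q ∣ p := fun h => absurd (Nat.le_of_dvd hp.pos h) (not_le.2 hpq)
  have hpq_ndvd : ¬ p ∣ q := fun h => hpq' ((Nat.prime_dvd_prime_iff_eq hp hq).1 h)
  set P₁ : Polynomial ℤ := expand ℤ m (cyclotomic p ℤ) with hP₁
  set Q₁ : Polynomial ℤ := expand ℤ m (cyclotomic q ℤ) with hQ₁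
  have hGPfact : Gpoly ℤ n (n / p) = cyclotomic n ℤ * P₁ := by
    have e1 : (expand ℤ (m * q)) (cyclotomic p ℤ)
        = ∑ l ∈ Finset.range p, (X : Polynomial ℤ) ^ (l * (m * q)) := by
      haveI : Fact p.Prime := ⟨hp⟩
      rw [cyclotomic_prime, map_sum]
      refine Finset.sum_congr rfl fun l _ => ?_
      rw [map_pow, expand_X, ← pow_mul, mul_comm]
    rw [hGp, ← e1, ← expand_expand, cyclotomic_expand_eq_cyclotomic_mul hq hqp_ndvd, map_mul,
      ← hΦ]
  have hGQfact : Gpoly ℤ n (n / q) = cyclotomic n ℤ * Q₁ := by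
    have e1 : (expand ℤ (m * p)) (cyclotomic q ℤ)
        = ∑ l ∈ Finset.range q, (X : Polynomial ℤ) ^ (l * (m * p)) := by
      haveI : Fact q.Prime := ⟨hq⟩
      rw [cyclotomic_prime, map_sum]
      refine Finset.sum_congr rfl fun l _ => ?_
      rw [map_pow, expand_X, ← pow_mul, mul_comm]
    rw [hGq, ← e1, ← expand_expand, cyclotomic_expand_eq_cyclotomic_mul hp hpq_ndvd, map_mul,
      mul_comm q p, ← hΦ]
  obtain ⟨u, v, huv⟩ := coprime_cyclo hp hq hpq'
  have hUV : (expand ℤ m u) * P₁ + (expand ℤ m v) * Q₁ = 1 := by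
    have := congrArg (expand ℤ m) huv
    simpa only [map_add, map_mul, map_one] using this
  obtain ⟨g, hg⟩ := hdvd
  have hg0 : g ≠ 0 := by
    rintro rfl
    exact hf0 (by simp [hg])
  -- monicity and degrees of P₁, Q₁
  have hP₁monic : P₁.Monic := (monic_expand_iff hm0).mpr (cyclotomic.monic p ℤ)
  have hQ₁monic : Q₁.Monic := (monic_expand_iff hm0).mpr (cyclotomic.monic q ℤ)
  have hndP₁ : P₁.natDegree = m * (p - 1) := by
    rw [hP₁, natDegree_expand, natDegree_cyclotomic, Nat.totient_prime hp, mul_comm]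
  have hndQ₁ : Q₁.natDegree = m * (q - 1) := by
    rw [hQ₁, natDegree_expand, natDegree_cyclotomic, Nat.totient_prime hq, mul_comm]
  have hdegP₁ : P₁.degree = ((m * (p - 1) : ℕ) : WithBot ℕ) := by
    rw [degree_eq_natDegree hP₁monic.ne_zero, hndP₁]
  have hdegQ₁ : Q₁.degree = ((m * (q - 1) : ℕ) : WithBot ℕ) := by
    rw [degree_eq_natDegree hQ₁monic.ne_zero, hndQ₁]
  -- define A and B
  set B : Polynomial ℤ := (g * expand ℤ m v) %ₘ P₁ with hBdef
  set A : Polynomial ℤ := g * expand ℤ m u + Q₁ * ((g * expand ℤ m v) /ₘ P₁) with hAdef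
  have hABg : A * P₁ + B * Q₁ = g := by
    have h2 := modByMonic_add_div (g * expand ℤ m v) P₁
    rw [hAdef, hBdef]
    linear_combination g * hUV + Q₁ * h2
  have hBdeg : B.degree < ((m * (p - 1) : ℕ) : WithBot ℕ) := by
    rw [← hdegP₁]
    exact degree_modByMonic_lt _ hP₁monic
  have hBc0 : ∀ j, m * p ≤ j → B.coeff j = 0 := by
    intro j hj
    apply coeff_eq_zero_of_degree_lt
    refine lt_of_lt_of_le hBdeg ?_
    have : m * (p - 1) ≤ j := le_trans (Nat.mul_le_mul_left m (Nat.sub_le p 1)) hj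
    exact_mod_cast this
  -- degree of g
  have hfnd : f.natDegree < n := (natDegree_lt_iff_degree_lt hf0).2 hdeg
  have hcycne : cyclotomic n ℤ ≠ 0 := cyclotomic_ne_zero n ℤ
  have htot : (cyclotomic n ℤ).natDegree = m * ((p - 1) * (q - 1)) := by
    rw [natDegree_cyclotomic, hn,
      Nat.totient_mul (Nat.Coprime.pow _ _ ((Nat.coprime_primes hp hq).2 hpq')),
      Nat.totient_prime_pow hp (by omega), Nat.totient_prime_pow hq (by omega), hm]
    ring
  have hndf : f.natDegree = m * ((p - 1) * (q - 1)) + g.natDegree := by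
    rw [hg, natDegree_mul hcycne hg0, htot]
  have hgnd : g.natDegree < m * q + m * (p - 1) := by
    have hid : n = m * ((p - 1) * (q - 1)) + (m * q + m * (p - 1)) := by
      obtain ⟨x, hx⟩ : ∃ x, p = x + 1 := ⟨p - 1, by have := hp.pos; omega⟩
      obtain ⟨y, hy⟩ : ∃ y, q = y + 1 := ⟨q - 1, by have := hq.pos; omega⟩
      rw [hnm, hx, hy]
      simp only [Nat.add_sub_cancel]
      ring
    linarith [hid, hndf, hfnd]
  have hgd : g.degree < ((m * q + m * (p - 1) : ℕ) : WithBot ℕ) := by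
    rw [degree_eq_natDegree hg0]
    exact_mod_cast hgnd
  have hAc0 : ∀ j, m * q ≤ j → A.coeff j = 0 := by
    have hdA : A.degree < ((m * q : ℕ) : WithBot ℕ) := by
      have hBQ : (B * Q₁).degree < ((m * q + m * (p - 1) : ℕ) : WithBot ℕ) := by
        rw [degree_mul, hdegQ₁]
        refine lt_of_lt_of_le (WithBot.add_lt_add_right (WithBot.natCast_ne_bot _) hBdeg) ?_
        rw [← Nat.cast_add]
        have : m * (p - 1) + m * (q - 1) ≤ m * q + m * (p - 1) := by
          rw [add_comm (m * q)]
          exact Nat.add_le_add_left (Nat.mul_le_mul_left m (Nat.sub_le q 1)) _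
        exact_mod_cast this
      have hsub : (A * P₁).degree < ((m * q + m * (p - 1) : ℕ) : WithBot ℕ) := by
        have hAPeq : A * P₁ = g - B * Q₁ := by linear_combination hABg
        rw [hAPeq]
        exact lt_of_le_of_lt (degree_sub_le _ _) (max_lt hgd hBQ)
      rw [degree_mul, hdegP₁, Nat.cast_add] at hsub
      exact (WithBot.add_lt_add_iff_right (WithBot.natCast_ne_bot _)).1 hsub
    intro j hj
    apply coeff_eq_zero_of_degree_lt
    refine lt_of_lt_of_le hdA ?_
    exact_mod_cast hj
  -- coefficient formula for f
  have hfABG : f = A * Gpoly ℤ n (n / p) + B * Gpoly ℤ n (n / q) := by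
    rw [hGPfact, hGQfact]
    linear_combination hg - cyclotomic n ℤ * hABg
  have hfc : ∀ i, i < n → f.coeff i = A.coeff (i % (m * q)) + B.coeff (i % (m * p)) := by
    intro i hi
    have hi1 : i < (m * q) * p := by rw [← hnp']; exact hi
    have hi2 : i < (m * p) * q := by rw [← hnq']; exact hi
    rw [hfABG, coeff_add, hGp, hGq, coeff_mul_geom A (m * q) p hmq0 hAc0 i,
      coeff_mul_geom B (m * p) q hmp0 hBc0 i, if_pos hi1, if_pos hi2]
  -- key bound for compatible pairs
  have hkey : ∀ u' v', u' < m * q → v' < m * p → u' % m = v' % m →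
      0 ≤ A.coeff u' + B.coeff v' ∧ A.coeff u' + B.coeff v' ≤ (d : ℤ) := by
    intro u' v' hu hv huveq
    have co : Nat.Coprime q p := (Nat.coprime_primes hq hp).2 (Ne.symm hpq')
    obtain ⟨s₀, hs₀q, hs₀p⟩ := Nat.chineseRemainder co (u' / m) (v' / m)
    set s : ℕ := s₀ % (q * p) with hs
    have hqp0 : 0 < q * p := Nat.mul_pos hq.pos hp.pos
    have hslt : s < q * p := Nat.mod_lt _ hqp0
    have hsq : s % q = u' / m := by
      rw [hs, Nat.mod_mod_of_dvd s₀ (dvd_mul_right q p), hs₀q]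
      exact Nat.mod_eq_of_lt (Nat.div_lt_of_lt_mul hu)
    have hsp : s % p = v' / m := by
      rw [hs, Nat.mod_mod_of_dvd s₀ (dvd_mul_left p q), hs₀p]
      exact Nat.mod_eq_of_lt (Nat.div_lt_of_lt_mul hv)
    set i : ℕ := m * s + u' % m with hidef
    have hrm : u' % m < m := Nat.mod_lt _ hm0
    have hin : i < n := by
      calc i < m * s + m := Nat.add_lt_add_left hrm _
        _ = m * (s + 1) := by ring
        _ ≤ m * (q * p) := Nat.mul_le_mul_left m hslt
        _ = n := by rw [hnm]; ring
    have hiu : i % (m * q) = u' := by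
      have e1 : i = (m * q) * (s / q) + (m * (s % q) + u' % m) := by
        calc i = m * s + u' % m := rfl
          _ = m * (q * (s / q) + s % q) + u' % m := by rw [Nat.div_add_mod]
          _ = (m * q) * (s / q) + (m * (s % q) + u' % m) := by ring
      have hlt : m * (s % q) + u' % m < m * q := by
        calc m * (s % q) + u' % m < m * (s % q) + m := Nat.add_lt_add_left hrm _
          _ = m * (s % q + 1) := by ring
          _ ≤ m * q := Nat.mul_le_mul_left m (Nat.succ_le_of_lt (Nat.mod_lt _ hq.pos))
      rw [e1, Nat.mul_add_mod, Nat.mod_eq_of_lt hlt, hsq]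
      exact Nat.div_add_mod u' m
    have hiv : i % (m * p) = v' := by
      have e1 : i = (m * p) * (s / p) + (m * (s % p) + v' % m) := by
        calc i = m * s + v' % m := by rw [hidef, huveq]
          _ = m * (p * (s / p) + s % p) + v' % m := by rw [Nat.div_add_mod]
          _ = (m * p) * (s / p) + (m * (s % p) + v' % m) := by ring
      have hrm' : v' % m < m := Nat.mod_lt _ hm0
      have hlt : m * (s % p) + v' % m < m * p := by
        calc m * (s % p) + v' % m < m * (s % p) + m := Nat.add_lt_add_left hrm' _
          _ = m * (s % p + 1) := by ring
          _ ≤ m * p := Nat.mul_le_mul_left m (Nat.succ_le_of_lt (Nat.mod_lt _ hp.pos))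
      rw [e1, Nat.mul_add_mod, Nat.mod_eq_of_lt hlt, hsp]
      exact Nat.div_add_mod v' m
    have hci := hcoeff i
    rw [hfc i hin, hiu, hiv] at hci
    exact hci
  -- the shifting construction
  set S : ℕ → Finset ℕ := fun r => (Finset.range (m * q)).filter (fun x => x % m = r)
    with hSdef
  have hSmem : ∀ u', u' < m * q → u' ∈ S (u' % m) := by
    intro u' hu
    rw [hSdef]
    simp [Finset.mem_filter, Finset.mem_range, hu]
  have hSne : ∀ r, r < m → (S r).Nonempty := by
    intro r hr
    refine ⟨r, ?_⟩
    rw [hSdef]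
    simp only [Finset.mem_filter, Finset.mem_range]
    exact ⟨lt_of_lt_of_le hr (Nat.le_mul_of_pos_right m hq.pos), Nat.mod_eq_of_lt hr⟩
  set t : ℕ → ℤ := fun r => if h : (S r).Nonempty then (S r).inf' h A.coeff else 0
    with htdef
  have ht_le : ∀ u', u' < m * q → t (u' % m) ≤ A.coeff u' := by
    intro u' hu
    have hne : (S (u' % m)).Nonempty := ⟨u', hSmem u' hu⟩
    rw [htdef]
    simp only [dif_pos hne]
    exact Finset.inf'_le _ (hSmem u' hu)
  have ht_ex : ∀ r, r < m → ∃ u₀, u₀ < m * q ∧ u₀ % m = r ∧ t r = A.coeff u₀ := by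
    intro r hr
    have hne : (S r).Nonempty := hSne r hr
    obtain ⟨u₀, hu₀mem, hu₀⟩ := Finset.exists_mem_eq_inf' hne A.coeff
    have := hu₀mem
    rw [hSdef] at this
    simp only [Finset.mem_filter, Finset.mem_range] at this
    refine ⟨u₀, this.1, this.2, ?_⟩
    rw [htdef]
    simp only [dif_pos hne]
    exact hu₀
  set A' : Polynomial ℤ :=
    ∑ u' ∈ Finset.range (m * q), C (A.coeff u' - t (u' % m)) * X ^ u' with hA'def
  set B' : Polynomial ℤ :=
    ∑ v' ∈ Finset.range (m * p), C (B.coeff v' + t (v' % m)) * X ^ v' with hB'def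
  have cA' : ∀ j, A'.coeff j = if j < m * q then A.coeff j - t (j % m) else 0 := by
    intro j; rw [hA'def]; exact coeff_mk _ _ _
  have cB' : ∀ j, B'.coeff j = if j < m * p then B.coeff j + t (j % m) else 0 := by
    intro j; rw [hB'def]; exact coeff_mk _ _ _
  have hA'c0 : ∀ j, m * q ≤ j → A'.coeff j = 0 := by
    intro j hj; rw [cA', if_neg (not_lt.2 hj)]
  have hB'c0 : ∀ j, m * p ≤ j → B'.coeff j = 0 := by
    intro j hj; rw [cB', if_neg (not_lt.2 hj)]
  -- bounds for A'
  have hA'bound : ∀ j, 0 ≤ A'.coeff j ∧ A'.coeff j ≤ (d : ℤ) := by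
    intro j
    rw [cA']
    split_ifs with hj
    · have hjm : j % m < m := Nat.mod_lt _ hm0
      obtain ⟨u₀, hu₀lt, hu₀r, hu₀val⟩ := ht_ex (j % m) hjm
      have hv₀lt : j % m < m * p := lt_of_lt_of_le hjm (Nat.le_mul_of_pos_right m hp.pos)
      have hv₀r : (j % m) % m = j % m := Nat.mod_eq_of_lt hjm
      have h1 := hkey j (j % m) hj hv₀lt (by rw [hv₀r])
      have h2 := hkey u₀ (j % m) hu₀lt hv₀lt (by rw [hu₀r, hv₀r])
      have h3 := ht_le j hj
      constructor
      · linarith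
      · rw [hu₀val]; linarith [h1.2, h2.1]
    · exact ⟨le_refl 0, hd'⟩
  have hB'bound : ∀ j, 0 ≤ B'.coeff j ∧ B'.coeff j ≤ (d : ℤ) := by
    intro j
    rw [cB']
    split_ifs with hj
    · have hjm : j % m < m := Nat.mod_lt _ hm0
      obtain ⟨u₀, hu₀lt, hu₀r, hu₀val⟩ := ht_ex (j % m) hjm
      have h1 := hkey u₀ j hu₀lt hj (by rw [hu₀r])
      rw [hu₀val]
      constructor
      · linarith [h1.1]
      · linarith [h1.2]
    · exact ⟨le_refl 0, hd'⟩
  -- final identity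
  have hfinal : f = A' * Gpoly ℤ n (n / p) + B' * Gpoly ℤ n (n / q) := by
    apply Polynomial.ext
    intro j
    rw [coeff_add, hGp, hGq, coeff_mul_geom A' (m * q) p hmq0 hA'c0 j,
      coeff_mul_geom B' (m * p) q hmp0 hB'c0 j]
    by_cases hj : j < n
    · rw [if_pos (by rw [← hnp']; exact hj), if_pos (by rw [← hnq']; exact hj)]
      have e1 : j % (m * q) % m = j % m := Nat.mod_mod_of_dvd j (dvd_mul_right m q)
      have e2 : j % (m * p) % m = j % m := Nat.mod_mod_of_dvd j (dvd_mul_right m p)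
      rw [cA', cB', if_pos (Nat.mod_lt _ hmq0), if_pos (Nat.mod_lt _ hmp0), e1, e2,
        hfc j hj]
      ring
    · rw [if_neg (by rw [← hnp']; exact hj), if_neg (by rw [← hnq']; exact hj)]
      rw [coeff_eq_zero_of_degree_lt (lt_of_lt_of_le hdeg (by exact_mod_cast not_lt.1 hj))]
      ring
  refine ⟨A', B', hA'bound, hB'bound, ?_, ?_, hfinal⟩
  · rw [hdivp]
    exact (degree_lt_iff_coeff_zero _ _).2 fun j hj => hA'c0 j hj
  · rw [hdivq]
    exact (degree_lt_iff_coeff_zero _ _).2 fun j hj => hB'c0 j hj
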